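/- Let N ∈ Mₙ(K) be a fixed matrix (in the paper, N = J_ν is a nilpotent Jordan matrix) and let A₁, A₁′ ∈ Mₙ(K). If N + A₁ζ is similar over 𝒟 to N + A₁′ζ, then there exist B₀ ∈ GLₙ(K) with B₀N = NB₀ and C₁ ∈ Mₙ(K) such that the matrix D = (Eₙ + C₁ζ)B₀ ∈ GLₙ(𝒟) satisfies D(N + A₁ζ)D⁻¹ = N + A₁′ζ. -/

import Mathlib

open Matrix

/-- The 𝒟-matrix `A₀ + A₁ζ` built from two matrices over `K`. -/
def dualMat {K : Type*} [Field K] {ι : Type*} (A₀ A₁ : Matrix ι ι K) :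
    Matrix ι ι (DualNumber K) :=
  A₀.map (TrivSqZeroExt.inl : K → DualNumber K) +
    A₁.map (TrivSqZeroExt.inr : K → DualNumber K)

/-- Similarity of matrices over the dual numbers. -/
def DSimilar {K : Type*} [Field K] {ι : Type*} [Fintype ι] [DecidableEq ι]
    (A B : Matrix ι ι (DualNumber K)) : Prop :=
  ∃ G : Matrix ι ι (DualNumber K), IsUnit G ∧ B = G * A * G⁻¹

namespace Aux

open TrivSqZeroExt

variable {K : Type*} [Field K] {n : ℕ}

lemma dualMat_fst (A₀ A₁ : Matrix (Fin n) (Fin n) K) (i j : Fin n) :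
    fst (dualMat A₀ A₁ i j) = A₀ i j := by
  simp [dualMat, Matrix.add_apply, Matrix.map_apply]

lemma dualMat_snd (A₀ A₁ : Matrix (Fin n) (Fin n) K) (i j : Fin n) :
    snd (dualMat A₀ A₁ i j) = A₁ i j := by
  simp [dualMat, Matrix.add_apply, Matrix.map_apply]

lemma dualMat_surj (G : Matrix (Fin n) (Fin n) (DualNumber K)) :
    G = dualMat (G.map fst) (G.map snd) := by
  ext i j <;>
    simp [dualMat, Matrix.add_apply, Matrix.map_apply]

lemma dualMat_mul (A₀ A₁ B₀ B₁ : Matrix (Fin n) (Fin n) K) :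
    dualMat A₀ A₁ * dualMat B₀ B₁ = dualMat (A₀ * B₀) (A₀ * B₁ + A₁ * B₀) := by
  ext i j <;>
    simp [Matrix.mul_apply, dualMat_fst, dualMat_snd, Matrix.add_apply,
      TrivSqZeroExt.fst_sum, TrivSqZeroExt.snd_sum, TrivSqZeroExt.fst_mul,
      TrivSqZeroExt.snd_mul, smul_eq_mul, mul_comm, Finset.sum_add_distrib]

lemma dualMat_inj {A₀ A₁ B₀ B₁ : Matrix (Fin n) (Fin n) K}
    (h : dualMat A₀ A₁ = dualMat B₀ B₁) : A₀ = B₀ ∧ A₁ = B₁ := by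
  constructor <;> ext i j
  · have := congrArg (fun M => fst (M i j)) h
    simpa [dualMat_fst] using this
  · have := congrArg (fun M => snd (M i j)) h
    simpa [dualMat_snd] using this

end Aux

/-- Lemma 2.2: if `N + A₁ζ ∼ N + A₁′ζ`, the conjugating matrix can be chosen
of the form `D = (Eₙ + C₁ζ)B₀` with `B₀ ∈ GLₙ(K)` commuting with `N`. -/
theorem stmt_3 {K : Type*} [Field K] {n : ℕ}
    (N A₁ A₁' : Matrix (Fin n) (Fin n) K)
    (h : DSimilar (dualMat N A₁) (dualMat N A₁')) :
    ∃ (B₀ C₁ : Matrix (Fin n) (Fin n) K),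
      IsUnit B₀ ∧ B₀ * N = N * B₀ ∧
      IsUnit (dualMat 1 C₁ * dualMat B₀ 0) ∧
      (dualMat 1 C₁ * dualMat B₀ 0) * dualMat N A₁ * (dualMat 1 C₁ * dualMat B₀ 0)⁻¹ =
        dualMat N A₁' := by
  obtain ⟨G, hG, hsim⟩ := h
  set G₀ : Matrix (Fin n) (Fin n) K := G.map TrivSqZeroExt.fst with hG₀
  set G₁ : Matrix (Fin n) (Fin n) K := G.map TrivSqZeroExt.snd with hG₁
  have hGd : G = dualMat G₀ G₁ := Aux.dualMat_surj G
  have hG₀unit : IsUnit G₀ := by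
    have := hG.map ((TrivSqZeroExt.fstHom K K K).mapMatrix)
    exact this
  have hGdet : IsUnit G.det := (Matrix.isUnit_iff_isUnit_det _).mp hG
  have hG₀det : IsUnit G₀.det := (Matrix.isUnit_iff_isUnit_det _).mp hG₀unit
  have hcomm : G * dualMat N A₁ = dualMat N A₁' * G := by
    have := congrArg (· * G) hsim
    simp only [mul_assoc] at this
    rw [Matrix.nonsing_inv_mul _ hGdet, mul_one] at this
    rw [this]
  rw [hGd, Aux.dualMat_mul, Aux.dualMat_mul] at hcomm
  obtain ⟨h0, h1⟩ := Aux.dualMat_inj hcomm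
  have hcancel : G₁ * G₀⁻¹ * G₀ = G₁ :=
    Matrix.nonsing_inv_mul_cancel_right _ _ hG₀det
  have hprod : dualMat 1 (G₁ * G₀⁻¹) * dualMat G₀ 0 = G := by
    rw [Aux.dualMat_mul]
    simp only [one_mul, mul_zero, zero_add, hcancel]
    exact hGd.symm
  refine ⟨G₀, G₁ * G₀⁻¹, hG₀unit, h0, ?_, ?_⟩
  · rw [hprod]; exact hG
  · rw [hprod]; exact hsim.symm
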